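/- Every function in the truncated Faber–Schauder class $\mathcal{F}_{FS}(M,C)$ on $[0,1]^d$ belongs to the MARS function class $\mathcal{F}_{MARS}(3^d I, 2^{d(M+2)/2} C)$, where $I = (1+2^M)^d$. That is, any tensor product $\beta_{\boldsymbol\lambda}\Psi_{\lambda_1}(x_1)\cdots\Psi_{\lambda_d}(x_d)$ with $|\beta_{\boldsymbol\lambda}| \le C$ can be written as a linear combination of at most $3^d$ MARS basis functions with coefficients bounded in absolute value by $2^{d(M+2)/2}C$ (provided all resolution levels are at most $M$). -/

import Mathlib

/-- The Faber–Schauder triangular function `Ψ_{j,k}` (explicit piecewise linear form). -/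
noncomputable def FSfun (j k : ℕ) (x : ℝ) : ℝ :=
  (2:ℝ) ^ ((j : ℝ) / 2) * max (x - (k : ℝ) / 2 ^ j) 0
    - (2:ℝ) ^ ((j : ℝ) / 2 + 1) * max (x - ((k : ℝ) + 1 / 2) / 2 ^ j) 0
    + (2:ℝ) ^ ((j : ℝ) / 2) * max (x - ((k : ℝ) + 1) / 2 ^ j) 0

/-- A member of the univariate Faber–Schauder system truncated at level `M`:
the constant `1`, the identity `x`, or a triangular function `Ψ_{j,k}` with `j ≤ M`. -/
def IsFSFun (M : ℕ) (ψ : ℝ → ℝ) : Prop :=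
  (∀ x, ψ x = 1) ∨ (∀ x, ψ x = x) ∨
    ∃ j k : ℕ, j ≤ M ∧ k < 2 ^ j ∧ ∀ x, ψ x = FSfun j k x

/-- A MARS basis function on `[0,1]^d`: `x ↦ ∏_{j ∈ S} (s_j(x_j - t_j))_+`. -/
def IsMARSBasis (d : ℕ) (h : (Fin d → ℝ) → ℝ) : Prop :=
  ∃ (S : Finset (Fin d)) (s t : Fin d → ℝ),
    (∀ j, s j = 1 ∨ s j = -1) ∧ (∀ j, t j ∈ Set.Icc (0:ℝ) 1) ∧
    ∀ x, h x = ∏ j ∈ S, max (s j * (x j - t j)) 0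

lemma fs_uni (M : ℕ) (ψ : ℝ → ℝ) (hψ : IsFSFun M ψ) :
    ∃ (c t : Fin 3 → ℝ) (b : Fin 3 → Bool),
      (∀ i, |c i| ≤ (2:ℝ) ^ (((M:ℝ)+2)/2)) ∧ (∀ i, t i ∈ Set.Icc (0:ℝ) 1) ∧
      ∀ x ∈ Set.Icc (0:ℝ) 1, ψ x = ∑ i, c i * (if b i then max (x - t i) 0 else 1) := by
  have h2 : (1:ℝ) ≤ 2 := one_le_two
  have hMe : (1:ℝ) ≤ (2:ℝ) ^ (((M:ℝ)+2)/2) := by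
    calc (1:ℝ) = (2:ℝ) ^ (0:ℝ) := by simp
    _ ≤ (2:ℝ) ^ (((M:ℝ)+2)/2) := by
        apply Real.rpow_le_rpow_of_exponent_le h2
        positivity
  rcases hψ with h1 | hid | ⟨j, k, hjM, hk, hfs⟩
  · refine ⟨![1,0,0], fun _ => 0, fun _ => false, ?_, ?_, ?_⟩
    · intro i; fin_cases i <;> simp <;> first | exact hMe | positivity
    · intro i; exact ⟨le_refl _, zero_le_one⟩
    · intro x hx; rw [h1 x, Fin.sum_univ_three]; norm_num; rfl
  · refine ⟨![1,0,0], fun _ => 0, fun _ => true, ?_, ?_, ?_⟩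
    · intro i; fin_cases i <;> simp <;> first | exact hMe | positivity
    · intro i; exact ⟨le_refl _, zero_le_one⟩
    · intro x hx
      rw [hid x, Fin.sum_univ_three]
      simp [max_eq_left hx.1]
  · have hp : (0:ℝ) < 2 ^ j := by positivity
    have hbound : (2:ℝ) ^ ((j:ℝ)/2 + 1) ≤ (2:ℝ) ^ (((M:ℝ)+2)/2) := by
      apply Real.rpow_le_rpow_of_exponent_le h2
      have : (j:ℝ) ≤ (M:ℝ) := by exact_mod_cast hjM
      linarith
    have hbound' : (2:ℝ) ^ ((j:ℝ)/2) ≤ (2:ℝ) ^ (((M:ℝ)+2)/2) := by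
      apply Real.rpow_le_rpow_of_exponent_le h2
      have : (j:ℝ) ≤ (M:ℝ) := by exact_mod_cast hjM
      linarith
    have hknn : (0:ℝ) ≤ (k:ℝ) := Nat.cast_nonneg k
    have hkle : (k:ℝ) + 1 ≤ (2:ℝ) ^ j := by
      have : (k:ℝ) + 1 ≤ ((2^j : ℕ) : ℝ) := by exact_mod_cast hk
      simpa using this
    refine ⟨![(2:ℝ) ^ ((j:ℝ)/2), -((2:ℝ) ^ ((j:ℝ)/2 + 1)), (2:ℝ) ^ ((j:ℝ)/2)],
      ![(k:ℝ)/2^j, ((k:ℝ) + 1/2)/2^j, ((k:ℝ)+1)/2^j], fun _ => true, ?_, ?_, ?_⟩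
    · intro i
      have h0 : (0:ℝ) ≤ (2:ℝ) ^ ((j:ℝ)/2) := Real.rpow_nonneg (by norm_num) _
      have h1 : (0:ℝ) ≤ (2:ℝ) ^ ((j:ℝ)/2 + 1) := Real.rpow_nonneg (by norm_num) _
      have hjM' : (j:ℝ) ≤ (M:ℝ) := by exact_mod_cast hjM
      fin_cases i <;> (simp [abs_of_nonneg, h0, h1]; linarith)
    · intro i
      fin_cases i <;> simp only [Matrix.cons_val_zero, Matrix.cons_val_one, Matrix.head_cons] <;>
        constructor <;> [skip; skip; skip; skip; skip; skip] <;>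
        first
          | exact div_nonneg (by linarith) hp.le
          | exact (div_le_one hp).2 (by linarith)
    · intro x hx
      rw [hfs x, FSfun, Fin.sum_univ_three]
      simp only [Matrix.cons_val_zero, Matrix.cons_val_one, Matrix.head_cons,
        Matrix.cons_val_two, Matrix.tail_cons, if_true]
      ring

theorem faber_schauder_subset_mars (d M : ℕ) (C β : ℝ) (hβ : |β| ≤ C)
    (ψ : Fin d → ℝ → ℝ) (hψ : ∀ l, IsFSFun M (ψ l)) :
    ∃ (n : ℕ), n ≤ 3 ^ d ∧
      ∃ (β' : Fin n → ℝ) (h : Fin n → (Fin d → ℝ) → ℝ),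
        (∀ m, |β' m| ≤ (2:ℝ) ^ ((d : ℝ) * ((M : ℝ) + 2) / 2) * C ∧ IsMARSBasis d (h m)) ∧
        ∀ x : Fin d → ℝ, (∀ i, x i ∈ Set.Icc (0:ℝ) 1) →
          β * ∏ l, ψ l (x l) = ∑ m, β' m * h m x := by
  have hC : 0 ≤ C := le_trans (abs_nonneg β) hβ
  choose c t b hc ht hval using fun l => fs_uni M (ψ l) (hψ l)
  have hcard : Fintype.card (Fin d → Fin 3) = 3 ^ d := by simp
  refine ⟨3 ^ d, le_refl _, ?_⟩
  let e : Fin (3 ^ d) ≃ (Fin d → Fin 3) := (Fintype.equivFinOfCardEq hcard).symm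
  refine ⟨fun m => β * ∏ l, c l (e m l),
    fun m x => ∏ l, (if b l (e m l) then max (x l - t l (e m l)) 0 else 1), ?_, ?_⟩
  · intro m
    constructor
    · calc |β * ∏ l, c l (e m l)| = |β| * ∏ l, |c l (e m l)| := by
            rw [abs_mul, Finset.abs_prod]
        _ ≤ C * ∏ _l : Fin d, (2:ℝ) ^ (((M:ℝ)+2)/2) :=
            mul_le_mul hβ
              (Finset.prod_le_prod (fun _ _ => abs_nonneg _) (fun l _ => hc l _))
              (Finset.prod_nonneg fun _ _ => abs_nonneg _) hC
        _ = 2 ^ ((d:ℝ) * ((M:ℝ)+2)/2) * C := by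
            rw [mul_comm]
            congr 1
            rw [Finset.prod_const, Finset.card_univ, Fintype.card_fin,
              ← Real.rpow_natCast ((2:ℝ) ^ (((M:ℝ)+2)/2)) d,
              ← Real.rpow_mul (by norm_num)]
            congr 1
            ring
    · refine ⟨Finset.univ.filter (fun l => b l (e m l) = true), fun _ => 1,
        fun l => t l (e m l), fun _ => Or.inl rfl, fun l => ht l _, ?_⟩
      intro x
      rw [Finset.prod_filter]
      simp only [one_mul]
  · intro x hx
    have hexp : ∏ l, ψ l (x l)
        = ∑ f : Fin d → Fin 3, ∏ l,
            (c l (f l) * (if b l (f l) then max (x l - t l (f l)) 0 else 1)) := by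
      calc ∏ l, ψ l (x l)
          = ∏ l, ∑ i ∈ (Finset.univ : Finset (Fin 3)),
              (c l i * (if b l i then max (x l - t l i) 0 else 1)) := by
            exact Finset.prod_congr rfl fun l _ => hval l (x l) (hx l)
        _ = ∑ f ∈ Fintype.piFinset (fun _ : Fin d => (Finset.univ : Finset (Fin 3))), ∏ l,
              (c l (f l) * (if b l (f l) then max (x l - t l (f l)) 0 else 1)) :=
            Finset.prod_univ_sum _ _
        _ = _ := by simp
    rw [hexp, Finset.mul_sum]
    rw [← Equiv.sum_comp e (fun f => β * ∏ l,
      (c l (f l) * (if b l (f l) then max (x l - t l (f l)) 0 else 1)))]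
    apply Finset.sum_congr rfl
    intro m _
    rw [Finset.prod_mul_distrib, mul_assoc]
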